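/- Let H be an infinite-dimensional complex Hilbert space, B = K(H) the compact operators, and ψ ∈ B* a functional given by a trace-class operator with nonzero trace. Then the derivation D = adj_ψ : B → B*, D(a) = ψa − aψ (where (ψa)(b) = ψ(ab) and (aψ)(b) = ψ(ba)), is not an inner Jordan derivation: there exist no finite families φ₁,…,φ_m ∈ B* and a₁,…,a_m ∈ B with D = ∑_i (L(φ_i)L(a_i) − L(a_i)L(φ_i)), where L denotes the Jordan module multiplication (a∘φ)(b) = φ(a∘b) with a∘b = (ab+ba)/2. -/

import Mathlib

/-- The compact operators on a complex Hilbert space, as a submodule of `H →L[ℂ] H`. -/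
noncomputable abbrev KH (H : Type*) [NormedAddCommGroup H] [InnerProductSpace ℂ H] :
    Submodule ℂ (H →L[ℂ] H) :=
  compactOperator (RingHom.id ℂ) H H

/-- The (associative) product of two compact operators. -/
noncomputable def kmul {H : Type*} [NormedAddCommGroup H] [InnerProductSpace ℂ H]
    (a b : KH H) : KH H :=
  ⟨(a : H →L[ℂ] H).comp (b : H →L[ℂ] H), by
    exact a.2.comp_clm (b : H →L[ℂ] H)⟩

/-- The Jordan product `a∘b = (ab+ba)/2` of compact operators. -/
noncomputable def kjo {H : Type*} [NormedAddCommGroup H] [InnerProductSpace ℂ H]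
    (a b : KH H) : KH H :=
  (2 : ℂ)⁻¹ • (kmul a b + kmul b a)

open Filter Finset

namespace S19

section basic
variable {H ι : Type*} [NormedAddCommGroup H] [InnerProductSpace ℂ H]
local notation "⟪" x ", " y "⟫" => @inner ℂ _ _ x y

/-- Rank-one operator `x ↦ ⟪v, x⟫ • u`. -/
noncomputable def rk (u v : H) : H →L[ℂ] H := (innerSL ℂ v).smulRight u

lemma rk_apply (u v x : H) : rk u v x = ⟪v, x⟫ • u := rfl

lemma isCompactOperator_rk (u v : H) : IsCompactOperator (rk u v) := by
  refine ⟨(fun c : ℂ => c • u) '' Metric.closedBall 0 ‖v‖,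
    (isCompact_closedBall 0 ‖v‖).image (by continuity), ?_⟩
  have h : Metric.ball (0:H) 1 ⊆ (rk u v) ⁻¹' ((fun c : ℂ => c • u) '' Metric.closedBall 0 ‖v‖) := by
    intro x hx
    refine ⟨⟪v, x⟫, ?_, rfl⟩
    simp only [Metric.mem_closedBall, dist_zero_right]
    calc ‖⟪v, x⟫‖ ≤ ‖v‖ * ‖x‖ := norm_inner_le_norm v x
    _ ≤ ‖v‖ * 1 := by
        have := (Metric.mem_ball.mp hx)
        rw [dist_zero_right] at this
        exact mul_le_mul_of_nonneg_left this.le (norm_nonneg v)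
    _ = ‖v‖ := mul_one _
  exact Filter.mem_of_superset (Metric.ball_mem_nhds 0 one_pos) h

/-- Finite-rank orthogonal projection onto `span {w j | j ∈ F}`. -/
noncomputable def P (w : HilbertBasis ι ℂ H) (F : Finset ι) : H →L[ℂ] H :=
  ∑ j ∈ F, rk (w j) (w j)

lemma P_apply (w : HilbertBasis ι ℂ H) (F : Finset ι) (x : H) :
    P w F x = ∑ j ∈ F, ⟪w j, x⟫ • w j := by
  simp [P, ContinuousLinearMap.sum_apply, rk_apply]

lemma norm_P_apply_le (w : HilbertBasis ι ℂ H) (F : Finset ι) (x : H) :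
    ‖P w F x‖ ≤ ‖x‖ := by
  have h2 : ‖P w F x‖ ^ 2 ≤ ‖x‖ ^ 2 := by
    refine le_trans (le_of_eq ?_) (w.orthonormal.sum_inner_products_le (s := F) x)
    rw [P_apply]
    have h1 : ⟪∑ j ∈ F, ⟪w j, x⟫ • w j, ∑ j ∈ F, ⟪w j, x⟫ • w j⟫
        = ∑ j ∈ F, (starRingEnd ℂ) ⟪w j, x⟫ * ⟪w j, x⟫ := by
      rw [sum_inner]
      refine Finset.sum_congr rfl fun j hj => ?_
      rw [inner_smul_left, w.orthonormal.inner_right_sum]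
      simp [hj]
    have hre : ‖∑ j ∈ F, ⟪w j, x⟫ • w j‖ ^ 2
        = RCLike.re ⟪∑ j ∈ F, ⟪w j, x⟫ • w j, ∑ j ∈ F, ⟪w j, x⟫ • w j⟫ := by
      rw [@inner_self_eq_norm_sq ℂ]
    rw [hre, h1, map_sum]
    refine Finset.sum_congr rfl fun j hj => ?_
    rw [mul_comm, RCLike.mul_conj]
    norm_cast
  exact (pow_le_pow_iff_left₀ (norm_nonneg _) (norm_nonneg _) two_ne_zero).mp h2

lemma norm_P_le (w : HilbertBasis ι ℂ H) (F : Finset ι) : ‖P w F‖ ≤ 1 :=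
  ContinuousLinearMap.opNorm_le_bound _ zero_le_one fun x => by
    rw [one_mul]; exact norm_P_apply_le w F x

lemma tendsto_P_apply (w : HilbertBasis ι ℂ H) (x : H) :
    Tendsto (fun F : Finset ι => P w F x) atTop (nhds x) := by
  have h0 := (w.hasSum_repr x)
  have h : ∀ F : Finset ι, P w F x = ∑ j ∈ F, w.repr x j • w j := by
    intro F; rw [P_apply]
    exact Finset.sum_congr rfl fun j _ => by rw [w.repr_apply_apply]
  simpa [HasSum, h] using h0

lemma tendsto_P_comp (w : HilbertBasis ι ℂ H) {c : H →L[ℂ] H}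
    (hc : IsCompactOperator c) :
    Tendsto (fun F : Finset ι => ‖(P w F).comp c - c‖) atTop (nhds 0) := by
  rw [Metric.tendsto_nhds]
  intro ε hε
  set δ := ε / 4 with hδdef
  have hδ : 0 < δ := by positivity
  obtain ⟨K, hK, hKsub⟩ := hc.image_closedBall_subset_compact 1
  obtain ⟨T, hTK, hTfin, hTcov⟩ := hK.finite_cover_balls hδ
  have hev : ∀ᶠ F : Finset ι in atTop, ∀ y ∈ T, ‖P w F y - y‖ < δ := by
    rw [Filter.eventually_all_finite hTfin]
    intro y _
    have h1 := Metric.tendsto_nhds.mp (tendsto_P_apply w y) δ hδ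
    refine h1.mono fun F hF => ?_
    rwa [dist_eq_norm] at hF
  refine hev.mono fun F hF => ?_
  rw [Real.dist_eq, sub_zero, abs_of_nonneg (norm_nonneg _)]
  have hb : ‖(P w F).comp c - c‖ ≤ 3 * δ := by
    refine ContinuousLinearMap.opNorm_le_bound _ (by positivity) fun x => ?_
    rcases eq_or_ne x 0 with rfl | hx
    · simp
    have hnx : (0:ℝ) < ‖x‖ := norm_pos_iff.mpr hx
    set u := ((‖x‖:ℂ))⁻¹ • x with hu
    have hun : ‖u‖ ≤ 1 := by
      rw [hu, norm_smul, norm_inv]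
      simp only [Complex.norm_real, norm_norm, abs_norm]
      rw [inv_mul_cancel₀ hnx.ne']
    have hcu : c u ∈ K := hKsub ⟨u, by simpa [Metric.mem_closedBall, dist_zero_right] using hun, rfl⟩
    obtain ⟨y, hyT, hy⟩ := Set.mem_iUnion₂.mp (hTcov hcu)
    have hy' : ‖c u - y‖ < δ := by rwa [Metric.mem_ball, dist_eq_norm] at hy
    have key : ‖((P w F).comp c - c) u‖ ≤ 3 * δ := by
      have heq : ((P w F).comp c - c) u = P w F (c u - y) + (P w F y - y) + (y - c u) := by
        simp only [ContinuousLinearMap.sub_apply, ContinuousLinearMap.comp_apply, map_sub]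
        abel
      rw [heq]
      calc ‖P w F (c u - y) + (P w F y - y) + (y - c u)‖
          ≤ ‖P w F (c u - y) + (P w F y - y)‖ + ‖y - c u‖ := norm_add_le _ _
        _ ≤ ‖P w F (c u - y)‖ + ‖P w F y - y‖ + ‖y - c u‖ := by
            gcongr; exact norm_add_le _ _
        _ ≤ ‖c u - y‖ + δ + ‖y - c u‖ := by
            gcongr
            · exact norm_P_apply_le w F _
            · exact (hF y hyT).le
        _ ≤ δ + δ + δ := by
            have h9 : ‖y - c u‖ = ‖c u - y‖ := norm_sub_rev _ _
            rw [h9]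
            gcongr
        _ = 3 * δ := by ring
    have hxu : ((P w F).comp c - c) x = (‖x‖:ℂ) • ((P w F).comp c - c) u := by
      rw [hu, map_smul, smul_smul]
      norm_cast
      rw [mul_inv_cancel₀ hnx.ne']
      norm_num
    rw [mul_comm, hxu, norm_smul]
    simp only [Complex.norm_real, norm_norm, abs_norm]
    exact mul_le_mul_of_nonneg_left key hnx.le
  calc ‖(P w F).comp c - c‖ ≤ 3 * δ := hb
    _ < ε := by rw [hδdef]; linarith

end basic

section adj
variable {H ι : Type*} [NormedAddCommGroup H] [InnerProductSpace ℂ H] [CompleteSpace H]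
local notation "⟪" x ", " y "⟫" => @inner ℂ _ _ x y

lemma adjoint_P (w : HilbertBasis ι ℂ H) (F : Finset ι) :
    ContinuousLinearMap.adjoint (P w F) = P w F := by
  symm
  rw [ContinuousLinearMap.eq_adjoint_iff]
  intro x y
  rw [P_apply, P_apply, sum_inner, inner_sum]
  refine Finset.sum_congr rfl fun j _ => ?_
  rw [inner_smul_left, inner_smul_right, ← inner_conj_symm x (w j)]
  ring

lemma comp_P_eq_sum_rk (c : H →L[ℂ] H) (w : HilbertBasis ι ℂ H) (F : Finset ι) :
    c.comp (P w F) = ∑ j ∈ F, rk (c (w j)) (w j) := by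
  ext x
  simp only [ContinuousLinearMap.comp_apply, P_apply, map_sum, ContinuousLinearMap.sum_apply,
    rk_apply, map_smul]

lemma isCompactOperator_P_comp (c : H →L[ℂ] H) (w : HilbertBasis ι ℂ H) (F : Finset ι) :
    IsCompactOperator (c.comp (P w F)) := by
  rw [comp_P_eq_sum_rk]
  classical
  have h : ∀ (G : Finset ι), IsCompactOperator ((∑ j ∈ G, rk (c (w j)) (w j) : H →L[ℂ] H)) := by
    intro G
    induction G using Finset.induction with
    | empty => simpa using isCompactOperator_zero
    | insert j s hj ih =>
        rw [Finset.sum_insert hj]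
        exact (isCompactOperator_rk _ _).add ih
  exact h F

lemma adjoint_comp_P (c : H →L[ℂ] H) (w : HilbertBasis ι ℂ H) (F : Finset ι) :
    ContinuousLinearMap.adjoint ((P w F).comp c) =
      (ContinuousLinearMap.adjoint c).comp (P w F) := by
  rw [ContinuousLinearMap.adjoint_comp, adjoint_P]

lemma tendsto_adjoint_comp (w : HilbertBasis ι ℂ H) {c : H →L[ℂ] H}
    (hc : IsCompactOperator c) :
    Tendsto (fun F : Finset ι =>
        (ContinuousLinearMap.adjoint c).comp (P w F)) atTop
      (nhds (ContinuousLinearMap.adjoint c)) := by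
  have h := tendsto_P_comp w hc
  rw [tendsto_iff_norm_sub_tendsto_zero]
  refine h.congr fun F => ?_
  rw [← adjoint_comp_P, ← map_sub, LinearIsometryEquiv.norm_map ContinuousLinearMap.adjoint]

lemma isCompactOperator_adjoint {c : H →L[ℂ] H} (hc : IsCompactOperator c) [Nonempty ι]
    (w : HilbertBasis ι ℂ H) :
    IsCompactOperator (ContinuousLinearMap.adjoint c) :=
  isCompactOperator_of_tendsto (tendsto_adjoint_comp w hc)
    (Filter.Eventually.of_forall fun F => isCompactOperator_P_comp _ w F)

lemma tendsto_comp_P [Nonempty ι] (w : HilbertBasis ι ℂ H) {c : H →L[ℂ] H}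
    (hc : IsCompactOperator c) :
    Tendsto (fun F : Finset ι => ‖c.comp (P w F) - c‖) atTop (nhds 0) := by
  have h := tendsto_P_comp w (isCompactOperator_adjoint hc w)
  refine h.congr fun F => ?_
  rw [← LinearIsometryEquiv.norm_map ContinuousLinearMap.adjoint
        ((P w F).comp (ContinuousLinearMap.adjoint c) - ContinuousLinearMap.adjoint c)]
  congr 1
  rw [map_sub, ContinuousLinearMap.adjoint_comp, adjoint_P, ContinuousLinearMap.adjoint_adjoint]

end adj

section alg
variable {H : Type*} [NormedAddCommGroup H] [InnerProductSpace ℂ H]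
local notation "⟪" x ", " y "⟫" => @inner ℂ _ _ x y

/-- Commutator of compact operators. -/
noncomputable def kcom (a b : KH H) : KH H := kmul a b - kmul b a

lemma jordan_id (x a b : KH H) :
    kjo (kjo x a) b - kjo a (kjo x b) = (4:ℂ)⁻¹ • kcom x (kcom a b) := by
  apply Subtype.ext
  simp only [kjo, kcom, kmul, Submodule.coe_sub, Submodule.coe_smul, Submodule.coe_add,
    Submodule.coe_toAddSubmonoid]
  ext v
  simp only [ContinuousLinearMap.sub_apply, ContinuousLinearMap.add_apply,
    ContinuousLinearMap.smul_apply, ContinuousLinearMap.comp_apply, map_add, map_smul, map_sub]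
  module

lemma kcom_add_right (a x y : KH H) : kcom a (x + y) = kcom a x + kcom a y := by
  apply Subtype.ext
  simp only [kcom, kmul, Submodule.coe_sub, Submodule.coe_add, Submodule.coe_toAddSubmonoid]
  ext v
  simp only [ContinuousLinearMap.sub_apply, ContinuousLinearMap.add_apply,
    ContinuousLinearMap.comp_apply, map_add]
  abel

lemma kcom_smul_right (a : KH H) (r : ℂ) (x : KH H) : kcom a (r • x) = r • kcom a x := by
  apply Subtype.ext
  simp only [kcom, kmul, Submodule.coe_sub, Submodule.coe_smul]
  ext v
  simp only [ContinuousLinearMap.sub_apply, ContinuousLinearMap.smul_apply,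
    ContinuousLinearMap.comp_apply, map_smul]
  module

/-- `x ↦ [a, x]` as a linear map on compact operators. -/
noncomputable def kcomL (a : KH H) : KH H →ₗ[ℂ] KH H where
  toFun := kcom a
  map_add' := kcom_add_right a
  map_smul' := kcom_smul_right a

lemma norm_kcom_le (a x : KH H) : ‖kcom a x‖ ≤ 2 * ‖a‖ * ‖x‖ := by
  have h : ‖kcom a x‖ = ‖(a : H →L[ℂ] H).comp (x : H →L[ℂ] H)
      - (x : H →L[ℂ] H).comp (a : H →L[ℂ] H)‖ := rfl
  rw [h]
  calc ‖(a : H →L[ℂ] H).comp (x : H →L[ℂ] H) - (x : H →L[ℂ] H).comp (a : H →L[ℂ] H)‖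
      ≤ ‖(a : H →L[ℂ] H).comp (x : H →L[ℂ] H)‖ + ‖(x : H →L[ℂ] H).comp (a : H →L[ℂ] H)‖ :=
        norm_sub_le _ _
    _ ≤ ‖(a : H →L[ℂ] H)‖ * ‖(x : H →L[ℂ] H)‖ + ‖(x : H →L[ℂ] H)‖ * ‖(a : H →L[ℂ] H)‖ := by
        gcongr <;> exact ContinuousLinearMap.opNorm_comp_le _ _
    _ = 2 * ‖a‖ * ‖x‖ := by rw [Submodule.coe_norm, Submodule.coe_norm]; ring

end alg
end S19

namespace S19
section E
variable {H ι : Type*} [NormedAddCommGroup H] [InnerProductSpace ℂ H]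
local notation "⟪" x ", " y "⟫" => @inner ℂ _ _ x y

/-- The rank-one operators `E j k = |w j⟩⟨w k|` as compact operators. -/
noncomputable def Ew (w : HilbertBasis ι ℂ H) (j k : ι) : KH H :=
  ⟨rk (w j) (w k), isCompactOperator_rk _ _⟩

lemma kmul_Ew (w : HilbertBasis ι ℂ H) (j k l n : ι) :
    kmul (Ew w j k) (Ew w l n) = ⟪w k, w l⟫ • Ew w j n := by
  apply Subtype.ext
  simp only [kmul, Ew, Submodule.coe_smul]
  ext x
  simp only [ContinuousLinearMap.comp_apply, ContinuousLinearMap.smul_apply, rk_apply,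
    map_smul, inner_smul_right]
  rw [smul_smul, smul_smul, mul_comm]

lemma kcom_Ew (w : HilbertBasis ι ℂ H) (j k : ι) :
    kcom (Ew w j k) (Ew w k j) = Ew w j j - Ew w k k := by
  classical
  have h1 : (⟪w k, w k⟫ : ℂ) = 1 := by
    rw [orthonormal_iff_ite.mp w.orthonormal]; simp
  have h2 : (⟪w j, w j⟫ : ℂ) = 1 := by
    rw [orthonormal_iff_ite.mp w.orthonormal]; simp
  rw [kcom, kmul_Ew, kmul_Ew, h1, h2, one_smul, one_smul]

lemma Ew_apply_basis_self (w : HilbertBasis ι ℂ H) (j : ι) :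
    ((Ew w j j : KH H) : H →L[ℂ] H) (w j) = w j := by
  have h : ((Ew w j j : KH H) : H →L[ℂ] H) (w j) = ⟪w j, w j⟫ • w j := rfl
  classical
  rw [h, orthonormal_iff_ite.mp w.orthonormal]
  simp

lemma Ew_apply_basis_ne (w : HilbertBasis ι ℂ H) {j i : ι} (hij : i ≠ j) :
    ((Ew w j j : KH H) : H →L[ℂ] H) (w i) = 0 := by
  have h : ((Ew w j j : KH H) : H →L[ℂ] H) (w i) = ⟪w j, w i⟫ • w j := rfl
  classical
  rw [h, orthonormal_iff_ite.mp w.orthonormal]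
  simp [Ne.symm hij]

end E
end S19

open S19
set_option maxHeartbeats 1000000

/-- let `H` be an infinite-dimensional complex Hilbert space, `B = K(H)`,
and `ψ ∈ B*` the functional `ψ(a) = Tr(t a)` given by a trace-class operator `t` with
`Tr t ≠ 0`.  Then the derivation `D = adj_ψ : B → B*`, `D(a)(b) = ψ(ab − ba)`, is not an
inner Jordan derivation: there are no finite families `φ₁, …, φ_m ∈ B*`, `c₁, …, c_m ∈ B`
with `D = ∑ᵢ (L(φᵢ)L(cᵢ) − L(cᵢ)L(φᵢ))`, i.e. pointwise
`D(a)(b) = ∑ᵢ φᵢ((cᵢ∘a)∘b − a∘(cᵢ∘b))` where `(c∘φ)(b) = φ(c∘b)`. -/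
theorem stmt19 {H ι : Type*} [NormedAddCommGroup H] [InnerProductSpace ℂ H]
    [CompleteSpace H]
    (hinf : ¬ FiniteDimensional ℂ H)
    (w : HilbertBasis ι ℂ H)
    (t : H →L[ℂ] H)
    -- `t` is trace class (nuclear with respect to the basis `w`):
    (htc : Summable fun i => ‖t (w i)‖)
    -- the trace of `t` is nonzero:
    (htr : (∑' i, (inner ℂ (w i) (t (w i)) : ℂ)) ≠ 0)
    -- `ψ ∈ K(H)*` is given by `ψ(b) = Tr (t b)`:
    (ψ : KH H →L[ℂ] ℂ)
    (hψ : ∀ b : KH H, ψ b = ∑' i, (inner ℂ (w i) ((t.comp (b : H →L[ℂ] H)) (w i)) : ℂ)) :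
    ¬ ∃ (m : ℕ) (φ : Fin m → (KH H →L[ℂ] ℂ)) (c : Fin m → KH H),
        ∀ a b : KH H,
          ψ (kmul a b - kmul b a) =
            ∑ i : Fin m, φ i (kjo (kjo (c i) a) b - kjo a (kjo (c i) b)) := by
  rintro ⟨m, φ, c, hD⟩
  classical
  -- `ι` is infinite
  have hι : Infinite ι := by
    by_contra hfin
    have : Finite ι := not_infinite_iff_finite.mp hfin
    have : Fintype ι := Fintype.ofFinite ι
    exact hinf (Module.Finite.of_basis (w.toOrthonormalBasis.toBasis))
  have hne : Nonempty ι := inferInstance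
  -- the functional χ
  set χ : KH H → ℂ := fun x => ψ x - (4:ℂ)⁻¹ * ∑ i, φ i (kcom (c i) x) with hχdef
  -- χ vanishes on commutators
  have hχcom : ∀ a b : KH H, χ (kcom a b) = 0 := by
    intro a b
    rw [hχdef]
    simp only
    rw [sub_eq_zero, Finset.mul_sum]
    have hstep : ψ (kcom a b) = ∑ i, φ i (kjo (kjo (c i) a) b - kjo a (kjo (c i) b)) := hD a b
    rw [hstep]
    refine Finset.sum_congr rfl fun i _ => ?_
    rw [jordan_id, map_smul, smul_eq_mul]
  -- χ is constant on the diagonal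
  have hdiag : ∀ j k : ι, χ (Ew w j j) = χ (Ew w k k) := by
    intro j k
    have h := hχcom (Ew w j k) (Ew w k j)
    rw [kcom_Ew] at h
    have hsub : χ (Ew w j j - Ew w k k) = χ (Ew w j j) - χ (Ew w k k) := by
      rw [hχdef]
      simp only
      rw [map_sub ψ]
      have h2 : ∀ i, kcom (c i) (Ew w j j - Ew w k k)
          = kcom (c i) (Ew w j j) - kcom (c i) (Ew w k k) := fun i =>
        map_sub (kcomL (c i)) _ _
      simp only [h2, map_sub, Finset.sum_sub_distrib, mul_sub]
      ring
    rw [hsub] at h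
    exact sub_eq_zero.mp h
  -- χ applied to the projections
  set PK : Finset ι → KH H := fun F => ∑ j ∈ F, Ew w j j with hPKdef
  have hPKcoe : ∀ F : Finset ι, ((PK F : KH H) : H →L[ℂ] H) = P w F := by
    intro F
    rw [hPKdef]
    simp only [P]
    rw [AddSubmonoidClass.coe_finset_sum]
    rfl
  have hχsum : ∀ F : Finset ι, χ (PK F) = ∑ j ∈ F, χ (Ew w j j) := by
    intro F
    rw [hχdef]
    simp only
    rw [hPKdef]
    simp only
    rw [map_sum ψ]
    have h2 : ∀ i, kcom (c i) (∑ j ∈ F, Ew w j j)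
        = ∑ j ∈ F, kcom (c i) (Ew w j j) := fun i => map_sum (kcomL (c i)) _ _
    simp only [h2, map_sum, Finset.mul_sum]
    rw [Finset.sum_sub_distrib]
    congr 1
    rw [Finset.sum_comm]
  -- χ is bounded on projections
  set C : ℝ := ‖ψ‖ + (4:ℝ)⁻¹ * ∑ i, ‖φ i‖ * (2 * ‖c i‖) with hCdef
  have hbound : ∀ F : Finset ι, ‖χ (PK F)‖ ≤ C := by
    intro F
    have hnormPK : ‖PK F‖ ≤ 1 := by
      rw [Submodule.coe_norm, hPKcoe]; exact norm_P_le w F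
    rw [hχdef]
    simp only
    calc ‖ψ (PK F) - (4:ℂ)⁻¹ * ∑ i, φ i (kcom (c i) (PK F))‖
        ≤ ‖ψ (PK F)‖ + ‖(4:ℂ)⁻¹ * ∑ i, φ i (kcom (c i) (PK F))‖ := norm_sub_le _ _
      _ ≤ ‖ψ‖ + (4:ℝ)⁻¹ * ∑ i, ‖φ i‖ * (2 * ‖c i‖) := by
          gcongr ?_ + ?_
          · calc ‖ψ (PK F)‖ ≤ ‖ψ‖ * ‖PK F‖ := ψ.le_opNorm _
              _ ≤ ‖ψ‖ * 1 := mul_le_mul_of_nonneg_left hnormPK (norm_nonneg ψ)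
              _ = ‖ψ‖ := mul_one _
          · rw [norm_mul]
            have h4 : ‖((4:ℂ)⁻¹)‖ = (4:ℝ)⁻¹ := by norm_num
            rw [h4]
            gcongr
            calc ‖∑ i, φ i (kcom (c i) (PK F))‖ ≤ ∑ i, ‖φ i (kcom (c i) (PK F))‖ :=
                norm_sum_le _ _
              _ ≤ ∑ i, ‖φ i‖ * (2 * ‖c i‖) := by
                  refine Finset.sum_le_sum fun i _ => ?_
                  calc ‖φ i (kcom (c i) (PK F))‖ ≤ ‖φ i‖ * ‖kcom (c i) (PK F)‖ :=
                      (φ i).le_opNorm _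
                    _ ≤ ‖φ i‖ * (2 * ‖c i‖ * ‖PK F‖) := by
                        gcongr
                        exact norm_kcom_le _ _
                    _ ≤ ‖φ i‖ * (2 * ‖c i‖ * 1) := by gcongr
                    _ = ‖φ i‖ * (2 * ‖c i‖) := by ring
  -- the common diagonal value is zero
  obtain ⟨j₀⟩ := hne
  have hlamzero : χ (Ew w j₀ j₀) = 0 := by
    by_contra hlam
    have hpos : 0 < ‖χ (Ew w j₀ j₀)‖ := norm_pos_iff.mpr hlam
    obtain ⟨n, hn⟩ := exists_nat_gt (C / ‖χ (Ew w j₀ j₀)‖)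
    obtain ⟨F, hF⟩ := Infinite.exists_subset_card_eq ι n
    have h1 : χ (PK F) = (n : ℂ) * χ (Ew w j₀ j₀) := by
      rw [hχsum]
      have : ∀ j ∈ F, χ (Ew w j j) = χ (Ew w j₀ j₀) := fun j _ => hdiag j j₀
      rw [Finset.sum_congr rfl this, Finset.sum_const, hF, nsmul_eq_mul]
    have h2 := hbound F
    rw [h1, norm_mul] at h2
    have h3 : ‖((n:ℂ))‖ = (n:ℝ) := by simp
    rw [h3] at h2
    have h4 : C / ‖χ (Ew w j₀ j₀)‖ < n := hn
    have h5 : C < n * ‖χ (Ew w j₀ j₀)‖ := (div_lt_iff₀ hpos).mp h4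
    linarith
  have hdiag0 : ∀ j : ι, χ (Ew w j j) = 0 := fun j => (hdiag j j₀).trans hlamzero
  -- hence ψ (PK F) equals the commutator sum
  have hkey : ∀ F : Finset ι, ψ (PK F) = (4:ℂ)⁻¹ * ∑ i, φ i (kcom (c i) (PK F)) := by
    intro F
    have h0 : χ (PK F) = 0 := by
      rw [hχsum, Finset.sum_congr rfl fun j _ => hdiag0 j, Finset.sum_const, smul_zero]
    rw [hχdef] at h0
    simp only at h0
    linear_combination h0
  -- ψ (E j j) is the diagonal entry of t
  have hψE : ∀ j : ι, ψ (Ew w j j) = (inner ℂ (w j) (t (w j)) : ℂ) := by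
    intro j
    rw [hψ]
    have hz : ∀ i, i ≠ j →
        (inner ℂ (w i) ((t.comp ((Ew w j j : KH H) : H →L[ℂ] H)) (w i)) : ℂ) = 0 := by
      intro i hij
      rw [ContinuousLinearMap.comp_apply, Ew_apply_basis_ne w hij, map_zero, inner_zero_right]
    rw [tsum_eq_single j hz, ContinuousLinearMap.comp_apply, Ew_apply_basis_self]
  -- the trace as a limit
  have hsummable : Summable (fun j : ι => (inner ℂ (w j) (t (w j)) : ℂ)) := by
    refine Summable.of_norm_bounded htc fun j => ?_
    calc ‖(inner ℂ (w j) (t (w j)) : ℂ)‖ ≤ ‖w j‖ * ‖t (w j)‖ := norm_inner_le_norm _ _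
      _ = ‖t (w j)‖ := by rw [w.orthonormal.1 j, one_mul]
  have hL : Tendsto (fun F : Finset ι => ψ (PK F)) atTop
      (nhds (∑' j, (inner ℂ (w j) (t (w j)) : ℂ))) := by
    have h := hsummable.hasSum
    rw [HasSum] at h
    refine h.congr fun F => ?_
    rw [hPKdef]
    simp only
    rw [map_sum ψ]
    exact Finset.sum_congr rfl fun j _ => (hψE j).symm
  -- the commutator sum tends to zero
  have hR : Tendsto (fun F : Finset ι => ψ (PK F)) atTop (nhds 0) := by
    have hterm : ∀ i : Fin m, Tendsto
        (fun F : Finset ι => φ i (kcom (c i) (PK F))) atTop (nhds 0) := by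
      intro i
      rw [tendsto_zero_iff_norm_tendsto_zero]
      have hcc : IsCompactOperator ((c i : KH H) : H →L[ℂ] H) := (c i).2
      have h1 := tendsto_comp_P (H := H) w hcc
      have h2 := tendsto_P_comp (H := H) w hcc
      have hb : ∀ F : Finset ι, ‖φ i (kcom (c i) (PK F))‖
          ≤ ‖φ i‖ * (‖((c i : KH H) : H →L[ℂ] H).comp (P w F) - ((c i : KH H) : H →L[ℂ] H)‖
            + ‖(P w F).comp ((c i : KH H) : H →L[ℂ] H) - ((c i : KH H) : H →L[ℂ] H)‖) := by
        intro F
        calc ‖φ i (kcom (c i) (PK F))‖ ≤ ‖φ i‖ * ‖kcom (c i) (PK F)‖ := (φ i).le_opNorm _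
          _ ≤ _ := by
              gcongr
              rw [Submodule.coe_norm]
              have hco : ((kcom (c i) (PK F) : KH H) : H →L[ℂ] H)
                  = (((c i : KH H) : H →L[ℂ] H).comp (P w F)
                      - ((c i : KH H) : H →L[ℂ] H))
                    + (((c i : KH H) : H →L[ℂ] H)
                      - (P w F).comp (((c i : KH H) : H →L[ℂ] H))) := by
                rw [show ((kcom (c i) (PK F) : KH H) : H →L[ℂ] H)
                    = ((c i : KH H) : H →L[ℂ] H).comp (((PK F : KH H) : H →L[ℂ] H))
                      - (((PK F : KH H) : H →L[ℂ] H)).comp ((c i : KH H) : H →L[ℂ] H) from rfl,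
                  hPKcoe]
                abel
              rw [hco]
              calc ‖_ + _‖ ≤ _ := norm_add_le _ _
                _ ≤ _ := by
                    gcongr
                    rw [norm_sub_rev]
      have hlim : Tendsto (fun F : Finset ι =>
          ‖φ i‖ * (‖((c i : KH H) : H →L[ℂ] H).comp (P w F) - ((c i : KH H) : H →L[ℂ] H)‖
            + ‖(P w F).comp ((c i : KH H) : H →L[ℂ] H) - ((c i : KH H) : H →L[ℂ] H)‖)) atTop
          (nhds 0) := by
        have h3 := ((h1.add h2).const_mul (‖φ i‖))
        simpa only [add_zero, mul_zero] using h3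
      exact squeeze_zero (fun F => norm_nonneg _) hb hlim
    have hsum0 : Tendsto (fun F : Finset ι =>
        (4:ℂ)⁻¹ * ∑ i, φ i (kcom (c i) (PK F))) atTop (nhds 0) := by
      have hs := tendsto_finset_sum Finset.univ (fun i _ => hterm i)
      have h5 := hs.const_mul ((4:ℂ)⁻¹)
      simpa only [Finset.sum_const_zero, mul_zero] using h5
    refine hsum0.congr fun F => (hkey F).symm
  exact htr (tendsto_nhds_unique hL hR)
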